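/- Let (V, D) be an EReal-extended L-convex set. Then for every p ∈ D and every α : EReal, the function fun v ↦ p v - α (using Mathlib's EReal subtraction) belongs to D. -/

import Mathlib

/-- Dual addition on `EReal`: `x ⊕ y = -((-x) + (-y))`. -/
noncomputable def oplus (x y : EReal) : EReal := -((-x) + (-y))

lemma oplus_coe (y : EReal) (r : ℝ) : oplus y r = y + r := by
  induction y using EReal.rec with
  | bot => simp [oplus]
  | top => simp [oplus]
  | coe y =>
      unfold oplus
      norm_cast
      ring

lemma isup_nat_add (x : EReal) (hx : x ≠ ⊥) : (⨆ n : ℕ, x + ((n : ℝ) : EReal)) = ⊤ := by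
  induction x using EReal.rec with
  | bot => simp at hx
  | top => simp [EReal.top_add_of_ne_bot (EReal.natCast_ne_bot _)]
  | coe x =>
      rw [iSup_eq_top]
      intro b hb
      induction b using EReal.rec with
      | bot => exact ⟨0, by simp⟩
      | top => simp at hb
      | coe b =>
          refine ⟨⌈b - x⌉₊ + 1, ?_⟩
          have hc := Nat.le_ceil (b - x)
          norm_cast
          push_cast
          linarith

theorem lconvex_weight_complete_sub {V : Type*} (D : Set (V → EReal))
    (hOrd : ∀ S ⊆ D, (fun v => ⨆ p ∈ S, p v) ∈ D ∧ (fun v => ⨅ p ∈ S, p v) ∈ D)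
    (hWt : ∀ p ∈ D, ∀ α : EReal, (fun v => oplus (p v) α) ∈ D) :
    ∀ p ∈ D, ∀ α : EReal, (fun v => p v - α) ∈ D := by
  intro p hp α
  induction α using EReal.rec with
  | coe x =>
      have := hWt p hp ((-x : ℝ) : EReal)
      convert this using 2 with v
      rw [oplus_coe]
      simp [sub_eq_add_neg]
  | top =>
      have h := (hOrd ∅ (by simp)).1
      convert h using 2 with v
      simp [sub_eq_add_neg]
  | bot =>
      set S : Set (V → EReal) := Set.range (fun n : ℕ => fun v => oplus (p v) ((n : ℝ) : EReal)) with hS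
      have hSD : S ⊆ D := by
        rintro q ⟨n, rfl⟩
        exact hWt p hp _
      have h := (hOrd S hSD).1
      convert h using 2 with v
      rw [hS, iSup_range]
      simp only [oplus_coe]
      rw [sub_eq_add_neg]
      by_cases hv : p v = ⊥
      · simp [hv]
      · rw [isup_nat_add _ hv, EReal.neg_bot]
        exact EReal.add_top_of_ne_bot hv
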